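/- arXiv:0709.2473 — 2 statements merged into one kernel-verified Lean document; each statement's English description precedes it below -/
import Mathlib

section
/- For every n ≥ 1, the cosquare Γ_n⁻ᵀΓ_n of the matrix Γ_n is similar to the Jordan block J_n((-1)^{n+1}). -/
open Matrix

def JBlock (n : ℕ) (μ : ℂ) : Matrix (Fin n) (Fin n) ℂ :=
  Matrix.of fun i j => if i = j then μ else if (i : ℕ) + 1 = (j : ℕ) then 1 else 0

def MatSimilar {m : Type*} [Fintype m] [DecidableEq m] (A B : Matrix m m ℂ) : Prop :=
  ∃ S : Matrix m m ℂ, IsUnit S ∧ A = S⁻¹ * B * S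

/-- The matrix `Γ_n`: nonzero entries only on the antidiagonal `i+j = n-1` and the
diagonal just to its right `i+j = n` (0-indexed), with value `(-1)^(n-1-i)` in row `i`;
so the last row begins `1, 1`, signs alternate going up, and the top-right entry is
`(-1)^(n+1)`.  (`Γ_1 = [1]`.) -/
def Gamma (n : ℕ) : Matrix (Fin n) (Fin n) ℂ :=
  Matrix.of fun i j =>
    if (i : ℕ) + (j : ℕ) = n - 1 ∨ (i : ℕ) + (j : ℕ) = n then (-1 : ℂ) ^ (n - 1 - (i : ℕ))
    else 0

/-- Explicit inverse of `(Gamma n)ᵀ`. -/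
def Bmat (n : ℕ) : Matrix (Fin n) (Fin n) ℂ :=
  Matrix.of fun i j => if (i : ℕ) + (j : ℕ) + 1 ≤ n then (-1 : ℂ) ^ (j : ℕ) else 0

/-- The cosquare: `ε` on the diagonal and `2ε` above it, `ε = (-1)^(n+1)`. -/
def Cmat (n : ℕ) : Matrix (Fin n) (Fin n) ℂ :=
  Matrix.of fun i j =>
    if (i : ℕ) = (j : ℕ) then (-1 : ℂ) ^ (n + 1)
    else if (i : ℕ) < (j : ℕ) then 2 * (-1 : ℂ) ^ (n + 1) else 0

/-- Conjugating matrix: `S i j = (2ε)^i * choose j i`. -/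
def Smat (n : ℕ) : Matrix (Fin n) (Fin n) ℂ :=
  Matrix.of fun i j => (2 * (-1 : ℂ) ^ (n + 1)) ^ (i : ℕ) * (Nat.choose (j : ℕ) (i : ℕ) : ℂ)

lemma neg_one_pow_eq_one_of_double (k : ℕ) : ((-1 : ℂ)) ^ k * (-1) ^ k = 1 := by
  rw [← pow_add]
  exact Even.neg_one_pow ⟨k, rfl⟩

lemma hockey (i : ℕ) : ∀ j : ℕ,
    (∑ t ∈ Finset.range j, ((t.choose i : ℕ) : ℂ)) = ((j.choose (i + 1) : ℕ) : ℂ)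
  | 0 => by simp
  | (j + 1) => by
      rw [Finset.sum_range_succ, hockey i j, Nat.choose_succ_succ]
      push_cast; ring

lemma sum_range_ite_lt (f : ℕ → ℂ) {j n : ℕ} (hj : j ≤ n) :
    (∑ t ∈ Finset.range n, if t < j then f t else 0) = ∑ t ∈ Finset.range j, f t := by
  rw [← Finset.sum_filter]
  congr 1
  ext t
  simp only [Finset.mem_filter, Finset.mem_range]
  omega

lemma Bmat_mul_Gamma_transpose (n : ℕ) (hn : 1 ≤ n) : Bmat n * (Gamma n)ᵀ = 1 := by
  ext i j
  simp only [Matrix.mul_apply, Bmat, Gamma, Matrix.transpose_apply, Matrix.of_apply,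
    Matrix.one_apply]
  have hi := i.isLt
  have hj := j.isLt
  rcases lt_trichotomy (j : ℕ) (i : ℕ) with hlt | heq | hgt
  · rw [if_neg (fun h => by rw [h] at hlt; omega)]
    apply Finset.sum_eq_zero
    intro t _
    by_cases h2 : (j : ℕ) + (t : ℕ) = n - 1 ∨ (j : ℕ) + (t : ℕ) = n
    · rw [if_neg (show ¬((i : ℕ) + (t : ℕ) + 1 ≤ n) by omega), zero_mul]
    · rw [if_neg h2, mul_zero]
  · have hij : i = j := Fin.ext heq.symm
    subst hij
    rw [if_pos rfl]
    rw [Finset.sum_eq_single (⟨n - 1 - (i : ℕ), by omega⟩ : Fin n)]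
    · simp only [Fin.val_mk]
      rw [if_pos (show (i : ℕ) + (n - 1 - (i : ℕ)) + 1 ≤ n by omega),
        if_pos (Or.inl (show (i : ℕ) + (n - 1 - (i : ℕ)) = n - 1 by omega))]
      exact neg_one_pow_eq_one_of_double _
    · intro t _ htne
      have htv : (t : ℕ) ≠ n - 1 - (i : ℕ) := fun h => htne (Fin.ext h)
      by_cases h2 : (i : ℕ) + (t : ℕ) = n - 1 ∨ (i : ℕ) + (t : ℕ) = n
      · rw [if_neg (show ¬((i : ℕ) + (t : ℕ) + 1 ≤ n) by omega), zero_mul]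
      · rw [if_neg h2, mul_zero]
    · simp
  · rw [if_neg (fun h => by rw [h] at hgt; omega)]
    have hj1 : 1 ≤ (j : ℕ) := by omega
    have key : ∀ t : Fin n,
        (if (i : ℕ) + (t : ℕ) + 1 ≤ n then (-1 : ℂ) ^ (t : ℕ) else 0) *
          (if (j : ℕ) + (t : ℕ) = n - 1 ∨ (j : ℕ) + (t : ℕ) = n
            then (-1 : ℂ) ^ (n - 1 - (j : ℕ)) else 0) =
        (if t = (⟨n - 1 - (j : ℕ), by omega⟩ : Fin n) then 1 else 0) +
        (if t = (⟨n - (j : ℕ), by omega⟩ : Fin n) then -1 else 0) := by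
      intro t
      have ht := t.isLt
      by_cases h2 : (j : ℕ) + (t : ℕ) = n - 1 ∨ (j : ℕ) + (t : ℕ) = n
      · rcases h2 with h2 | h2
        · have e1 : t = (⟨n - 1 - (j : ℕ), by omega⟩ : Fin n) := Fin.ext (by
            simp only [Fin.val_mk]; omega)
          have e2 : t ≠ (⟨n - (j : ℕ), by omega⟩ : Fin n) := fun h => by
            have : (t : ℕ) = n - (j : ℕ) := by rw [h]
            omega
          rw [if_pos (show (i : ℕ) + (t : ℕ) + 1 ≤ n by omega),
            if_pos (Or.inl h2), if_pos e1, if_neg e2, add_zero]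
          have : (t : ℕ) = n - 1 - (j : ℕ) := by omega
          rw [this]
          exact neg_one_pow_eq_one_of_double _
        · have e2 : t = (⟨n - (j : ℕ), by omega⟩ : Fin n) := Fin.ext (by
            simp only [Fin.val_mk]; omega)
          have e1 : t ≠ (⟨n - 1 - (j : ℕ), by omega⟩ : Fin n) := fun h => by
            have : (t : ℕ) = n - 1 - (j : ℕ) := by rw [h]
            omega
          rw [if_pos (show (i : ℕ) + (t : ℕ) + 1 ≤ n by omega),
            if_pos (Or.inr h2), if_neg e1, if_pos e2, zero_add]
          have htv : (t : ℕ) = n - (j : ℕ) := by omega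
          rw [htv, ← pow_add]
          exact Odd.neg_one_pow ⟨n - 1 - (j : ℕ), by omega⟩
      · have e1 : t ≠ (⟨n - 1 - (j : ℕ), by omega⟩ : Fin n) := fun h => by
          have : (t : ℕ) = n - 1 - (j : ℕ) := by rw [h]
          omega
        have e2 : t ≠ (⟨n - (j : ℕ), by omega⟩ : Fin n) := fun h => by
          have : (t : ℕ) = n - (j : ℕ) := by rw [h]
          omega
        rw [if_neg h2, mul_zero, if_neg e1, if_neg e2, add_zero]
    rw [Finset.sum_congr rfl fun t _ => key t, Finset.sum_add_distrib,
      Finset.sum_ite_eq' Finset.univ, Finset.sum_ite_eq' Finset.univ]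
    simp

lemma neg_one_pow_succ_eq (n : ℕ) (hn : 1 ≤ n) : ((-1 : ℂ)) ^ (n + 1) = (-1) ^ (n - 1) := by
  have h : n + 1 = (n - 1) + 2 := by omega
  rw [h, pow_add]
  norm_num

lemma Bmat_mul_Gamma (n : ℕ) (hn : 1 ≤ n) : Bmat n * Gamma n = Cmat n := by
  ext i j
  simp only [Matrix.mul_apply, Bmat, Gamma, Cmat, Matrix.of_apply]
  have hi := i.isLt
  have hj := j.isLt
  rcases lt_trichotomy (j : ℕ) (i : ℕ) with hlt | heq | hgt
  · rw [if_neg (by omega), if_neg (by omega)]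
    apply Finset.sum_eq_zero
    intro t _
    by_cases h2 : (t : ℕ) + (j : ℕ) = n - 1 ∨ (t : ℕ) + (j : ℕ) = n
    · rw [if_neg (show ¬((i : ℕ) + (t : ℕ) + 1 ≤ n) by omega), zero_mul]
    · rw [if_neg h2, mul_zero]
  · rw [if_pos heq.symm]
    rw [Finset.sum_eq_single (⟨n - 1 - (j : ℕ), by omega⟩ : Fin n)]
    · simp only [Fin.val_mk]
      rw [if_pos (show (i : ℕ) + (n - 1 - (j : ℕ)) + 1 ≤ n by omega),
        if_pos (Or.inl (show (n - 1 - (j : ℕ)) + (j : ℕ) = n - 1 by omega))]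
      have h1 : n - 1 - (n - 1 - (j : ℕ)) = (j : ℕ) := by omega
      rw [h1, ← pow_add, neg_one_pow_succ_eq n hn]
      congr 1
      omega
    · intro t _ htne
      have htv : (t : ℕ) ≠ n - 1 - (j : ℕ) := fun h => htne (Fin.ext h)
      by_cases h2 : (t : ℕ) + (j : ℕ) = n - 1 ∨ (t : ℕ) + (j : ℕ) = n
      · rw [if_neg (show ¬((i : ℕ) + (t : ℕ) + 1 ≤ n) by omega), zero_mul]
      · rw [if_neg h2, mul_zero]
    · simp
  · rw [if_neg (by omega), if_pos hgt]
    have hj1 : 1 ≤ (j : ℕ) := by omega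
    have key : ∀ t : Fin n,
        (if (i : ℕ) + (t : ℕ) + 1 ≤ n then (-1 : ℂ) ^ (t : ℕ) else 0) *
          (if (t : ℕ) + (j : ℕ) = n - 1 ∨ (t : ℕ) + (j : ℕ) = n
            then (-1 : ℂ) ^ (n - 1 - (t : ℕ)) else 0) =
        (if t = (⟨n - 1 - (j : ℕ), by omega⟩ : Fin n) then (-1 : ℂ) ^ (n + 1) else 0) +
        (if t = (⟨n - (j : ℕ), by omega⟩ : Fin n) then (-1 : ℂ) ^ (n + 1) else 0) := by
      intro t
      have ht := t.isLt
      by_cases h2 : (t : ℕ) + (j : ℕ) = n - 1 ∨ (t : ℕ) + (j : ℕ) = n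
      · rcases h2 with h2 | h2
        · have e1 : t = (⟨n - 1 - (j : ℕ), by omega⟩ : Fin n) := Fin.ext (by
            simp only [Fin.val_mk]; omega)
          have e2 : t ≠ (⟨n - (j : ℕ), by omega⟩ : Fin n) := fun h => by
            have : (t : ℕ) = n - (j : ℕ) := by rw [h]
            omega
          rw [if_pos (show (i : ℕ) + (t : ℕ) + 1 ≤ n by omega),
            if_pos (Or.inl h2), if_pos e1, if_neg e2, add_zero, ← pow_add,
            neg_one_pow_succ_eq n hn]
          congr 1
          omega
        · have e2 : t = (⟨n - (j : ℕ), by omega⟩ : Fin n) := Fin.ext (by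
            simp only [Fin.val_mk]; omega)
          have e1 : t ≠ (⟨n - 1 - (j : ℕ), by omega⟩ : Fin n) := fun h => by
            have : (t : ℕ) = n - 1 - (j : ℕ) := by rw [h]
            omega
          rw [if_pos (show (i : ℕ) + (t : ℕ) + 1 ≤ n by omega),
            if_pos (Or.inr h2), if_neg e1, if_pos e2, zero_add, ← pow_add,
            neg_one_pow_succ_eq n hn]
          congr 1
          omega
      · have e1 : t ≠ (⟨n - 1 - (j : ℕ), by omega⟩ : Fin n) := fun h => by
          have : (t : ℕ) = n - 1 - (j : ℕ) := by rw [h]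
          omega
        have e2 : t ≠ (⟨n - (j : ℕ), by omega⟩ : Fin n) := fun h => by
          have : (t : ℕ) = n - (j : ℕ) := by rw [h]
          omega
        rw [if_neg h2, mul_zero, if_neg e1, if_neg e2, add_zero]
    rw [Finset.sum_congr rfl fun t _ => key t, Finset.sum_add_distrib,
      Finset.sum_ite_eq' Finset.univ, Finset.sum_ite_eq' Finset.univ]
    simp
    ring

lemma Smat_isUnit (n : ℕ) : IsUnit (Smat n) := by
  rw [Matrix.isUnit_iff_isUnit_det]
  have hdet : (Smat n).det = ∏ i : Fin n, (2 * (-1 : ℂ) ^ (n + 1)) ^ (i : ℕ) := by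
    rw [Matrix.det_of_upperTriangular (by
      intro i j h
      have h' : (j : ℕ) < (i : ℕ) := h
      simp only [Smat, Matrix.of_apply]
      rw [Nat.choose_eq_zero_of_lt h']
      simp)]
    exact Finset.prod_congr rfl fun i _ => by simp [Smat]
  rw [hdet, isUnit_iff_ne_zero]
  apply Finset.prod_ne_zero_iff.2
  intro i _
  apply pow_ne_zero
  apply mul_ne_zero two_ne_zero
  apply pow_ne_zero
  norm_num

lemma Smat_mul_Cmat (n : ℕ) :
    Smat n * Cmat n = JBlock n ((-1) ^ (n + 1)) * Smat n := by
  set w : ℂ := 2 * (-1 : ℂ) ^ (n + 1) with hw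
  set e : ℂ := (-1 : ℂ) ^ (n + 1) with he
  ext i j
  have hi := i.isLt
  have hj := j.isLt
  simp only [Matrix.mul_apply, Smat, Cmat, JBlock, Matrix.of_apply, ← hw, ← he]
  -- LHS
  have keyL : ∀ t : Fin n,
      w ^ (i : ℕ) * ((Nat.choose (t : ℕ) (i : ℕ) : ℕ) : ℂ) *
        (if (t : ℕ) = (j : ℕ) then e else if (t : ℕ) < (j : ℕ) then 2 * e else 0) =
      (if t = j then w ^ (i : ℕ) * ((Nat.choose (j : ℕ) (i : ℕ) : ℕ) : ℂ) * e else 0) +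
      (if (t : ℕ) < (j : ℕ)
        then w ^ (i : ℕ) * ((Nat.choose (t : ℕ) (i : ℕ) : ℕ) : ℂ) * (2 * e) else 0) := by
    intro t
    by_cases h1 : t = j
    · subst h1
      rw [if_pos rfl, if_pos rfl, if_neg (lt_irrefl _), add_zero]
    · have h1' : (t : ℕ) ≠ (j : ℕ) := fun h => h1 (Fin.ext h)
      rw [if_neg h1', if_neg h1, zero_add]
      by_cases h2 : (t : ℕ) < (j : ℕ)
      · rw [if_pos h2, if_pos h2]
      · rw [if_neg h2, if_neg h2, mul_zero]
  rw [Finset.sum_congr rfl fun t _ => keyL t, Finset.sum_add_distrib,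
    Finset.sum_ite_eq' Finset.univ]
  have hsum2 : (∑ t : Fin n, if (t : ℕ) < (j : ℕ)
      then w ^ (i : ℕ) * ((Nat.choose (t : ℕ) (i : ℕ) : ℕ) : ℂ) * (2 * e) else 0) =
      w ^ (i : ℕ) * (2 * e) * ((Nat.choose (j : ℕ) ((i : ℕ) + 1) : ℕ) : ℂ) := by
    rw [Fin.sum_univ_eq_sum_range
      (fun t => if t < (j : ℕ) then w ^ (i : ℕ) * ((Nat.choose t (i : ℕ) : ℕ) : ℂ) * (2 * e) else 0) n,
      sum_range_ite_lt _ (le_of_lt hj)]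
    rw [show (∑ t ∈ Finset.range (j : ℕ),
        w ^ (i : ℕ) * ((Nat.choose t (i : ℕ) : ℕ) : ℂ) * (2 * e)) =
        w ^ (i : ℕ) * (2 * e) * (∑ t ∈ Finset.range (j : ℕ), ((Nat.choose t (i : ℕ) : ℕ) : ℂ))
      by rw [Finset.mul_sum]; exact Finset.sum_congr rfl fun t _ => by ring]
    rw [hockey]
  rw [hsum2]
  -- RHS
  have keyR : ∀ t : Fin n,
      (if i = t then e else if (i : ℕ) + 1 = (t : ℕ) then 1 else 0) *
        (w ^ (t : ℕ) * ((Nat.choose (j : ℕ) (t : ℕ) : ℕ) : ℂ)) =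
      (if t = i then e * (w ^ (i : ℕ) * ((Nat.choose (j : ℕ) (i : ℕ) : ℕ) : ℂ)) else 0) +
      (if (t : ℕ) = (i : ℕ) + 1
        then w ^ ((i : ℕ) + 1) * ((Nat.choose (j : ℕ) ((i : ℕ) + 1) : ℕ) : ℂ) else 0) := by
    intro t
    by_cases h1 : i = t
    · subst h1
      rw [if_pos rfl, if_pos rfl, if_neg (by omega), add_zero]
    · rw [if_neg h1, if_neg (fun h : t = i => h1 h.symm), zero_add]
      by_cases h2 : (i : ℕ) + 1 = (t : ℕ)
      · rw [if_pos h2, if_pos h2.symm, one_mul, ← h2]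
      · rw [if_neg h2, if_neg (fun h => h2 h.symm), zero_mul]
  rw [Finset.sum_congr rfl fun t _ => keyR t, Finset.sum_add_distrib,
    Finset.sum_ite_eq' Finset.univ]
  have hsum2R : (∑ t : Fin n, if (t : ℕ) = (i : ℕ) + 1
      then w ^ ((i : ℕ) + 1) * ((Nat.choose (j : ℕ) ((i : ℕ) + 1) : ℕ) : ℂ) else 0) =
      if (i : ℕ) + 1 < n
        then w ^ ((i : ℕ) + 1) * ((Nat.choose (j : ℕ) ((i : ℕ) + 1) : ℕ) : ℂ) else 0 := by
    by_cases hh : (i : ℕ) + 1 < n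
    · rw [if_pos hh, Finset.sum_eq_single (⟨(i : ℕ) + 1, hh⟩ : Fin n)]
      · rw [if_pos rfl]
      · intro t _ htne
        rw [if_neg (fun h => htne (Fin.ext (by simp only [Fin.val_mk]; omega)))]
      · simp
    · rw [if_neg hh]
      apply Finset.sum_eq_zero
      intro t _
      rw [if_neg (fun h => by have := t.isLt; omega)]
  rw [hsum2R]
  by_cases hh : (i : ℕ) + 1 < n
  · rw [if_pos hh]
    simp only [Finset.mem_univ, if_pos]
    rw [pow_succ]
    ring
  · rw [if_neg hh]
    have hcz : Nat.choose (j : ℕ) ((i : ℕ) + 1) = 0 := Nat.choose_eq_zero_of_lt (by omega)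
    rw [hcz]
    simp only [Finset.mem_univ, if_pos, Nat.cast_zero]
    ring

/-- The cosquare `Γ_n⁻ᵀ Γ_n` is similar to the Jordan block `J_n((-1)^(n+1))`. -/
theorem cosquare_Gamma_similar_jordan (n : ℕ) (hn : 1 ≤ n) :
    MatSimilar (((Gamma n)ᵀ)⁻¹ * Gamma n) (JBlock n ((-1) ^ (n + 1))) := by
  have hinv : ((Gamma n)ᵀ)⁻¹ = Bmat n :=
    Matrix.inv_eq_left_inv (Bmat_mul_Gamma_transpose n hn)
  have hSunit := Smat_isUnit n
  refine ⟨Smat n, hSunit, ?_⟩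
  rw [hinv, Bmat_mul_Gamma n hn]
  have hdetS : IsUnit (Smat n).det := (Matrix.isUnit_iff_isUnit_det _).1 hSunit
  calc Cmat n = (Smat n)⁻¹ * (Smat n * Cmat n) := by
        rw [← Matrix.mul_assoc, Matrix.nonsing_inv_mul _ hdetS, Matrix.one_mul]
    _ = (Smat n)⁻¹ * (JBlock n ((-1) ^ (n + 1)) * Smat n) := by rw [Smat_mul_Cmat n]
    _ = (Smat n)⁻¹ * JBlock n ((-1) ^ (n + 1)) * Smat n := by rw [Matrix.mul_assoc]
end

section
/- Let P_N be the reversal matrix on C^{|N|} built from blocks and Δ_N = Δ_{n₁} ⊕ ··· ⊕ Δ_{n_k}. Then the *cosquare D_N := Δ_N⁻*Δ_N satisfies D_N = (I - iJ_N)⁻¹(I + iJ_N) = I + 2iJ_N + 2i²J_N² + 2i³J_N³ + ···, where J_N = J_{n₁}(0) ⊕ ··· ⊕ J_{n_k}(0). In particular D_N is a polynomial in J_N, and J_N = i(I - D_N)(I + D_N)⁻¹ is a polynomial in D_N. -/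
open Matrix

def Delta (n : ℕ) : Matrix (Fin n) (Fin n) ℂ :=
  Matrix.of fun i j =>
    if (i : ℕ) + (j : ℕ) = n - 1 then 1
    else if (i : ℕ) + (j : ℕ) = n then Complex.I
    else 0

/-- `J_N = J_{n₁}(0) ⊕ ⋯ ⊕ J_{n_k}(0)`. -/
noncomputable def JN {k : ℕ} (N : Fin k → ℕ) :
    Matrix (Σ i, Fin (N i)) (Σ i, Fin (N i)) ℂ :=
  Matrix.blockDiagonal' fun i => JBlock (N i) 0

/-- `Δ_N = Δ_{n₁} ⊕ ⋯ ⊕ Δ_{n_k}`. -/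
noncomputable def DeltaN {k : ℕ} (N : Fin k → ℕ) :
    Matrix (Σ i, Fin (N i)) (Σ i, Fin (N i)) ℂ :=
  Matrix.blockDiagonal' fun i => Delta (N i)

def Pm (n : ℕ) : Matrix (Fin n) (Fin n) ℂ :=
  Matrix.of fun i j => if (i : ℕ) + (j : ℕ) = n - 1 then 1 else 0

lemma Pm_mul_Pm (n : ℕ) : Pm n * Pm n = 1 := by
  ext i j
  have hi := i.isLt
  have hj := j.isLt
  rw [mul_apply, Finset.sum_eq_single (⟨n - 1 - (i : ℕ), by omega⟩ : Fin n)]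
  · simp only [Pm, of_apply, one_apply, Fin.ext_iff]
    split_ifs <;> simp_all <;> omega
  · intro l _ hl
    simp only [Pm, of_apply]
    rw [if_neg, zero_mul]
    intro h
    exact hl (Fin.ext (show (l:ℕ) = n - 1 - (i:ℕ) by omega))
  · intro h; exact absurd (Finset.mem_univ _) h

lemma Delta_eq (n : ℕ) : Delta n = Pm n * (1 + Complex.I • JBlock n 0) := by
  ext i j
  have hi := i.isLt
  have hj := j.isLt
  rw [mul_apply, Finset.sum_eq_single (⟨n - 1 - (i : ℕ), by omega⟩ : Fin n)]
  · simp only [Delta, Pm, JBlock, of_apply, Matrix.add_apply, one_apply, Matrix.smul_apply, Fin.ext_iff,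
      smul_eq_mul]
    split_ifs <;> simp_all <;> omega
  · intro l _ hl
    simp only [Pm, of_apply]
    rw [if_neg, zero_mul]
    intro h
    exact hl (Fin.ext (show (l:ℕ) = n - 1 - (i:ℕ) by omega))
  · intro h; exact absurd (Finset.mem_univ _) h

lemma DeltaH_eq (n : ℕ) : (Delta n)ᴴ = Pm n * (1 - Complex.I • JBlock n 0) := by
  ext i j
  have hi := i.isLt
  have hj := j.isLt
  rw [mul_apply, Finset.sum_eq_single (⟨n - 1 - (i : ℕ), by omega⟩ : Fin n)]
  · simp only [Delta, Pm, JBlock, of_apply, Matrix.sub_apply, one_apply, Matrix.smul_apply, Fin.ext_iff,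
      conjTranspose_apply, smul_eq_mul]
    split_ifs <;> simp_all [Complex.ext_iff] <;> omega
  · intro l _ hl
    simp only [Pm, of_apply]
    rw [if_neg, zero_mul]
    intro h
    exact hl (Fin.ext (show (l:ℕ) = n - 1 - (i:ℕ) by omega))
  · intro h; exact absurd (Finset.mem_univ _) h

lemma JBlock_pow (n m : ℕ) :
    JBlock n 0 ^ m
      = Matrix.of (fun (i j : Fin n) => if (i : ℕ) + m = (j : ℕ) then (1 : ℂ) else 0) := by
  induction m with
  | zero =>
    ext i j
    simp [one_apply, Fin.ext_iff]
  | succ m ih =>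
    rw [pow_succ', ih]
    ext i j
    have hi := i.isLt
    have hj := j.isLt
    rw [mul_apply]
    by_cases h : (i : ℕ) + 1 < n
    · rw [Finset.sum_eq_single (⟨(i : ℕ) + 1, h⟩ : Fin n)]
      · simp only [JBlock, of_apply, Fin.ext_iff, Fin.val_mk]
        rw [if_neg (by omega), if_pos trivial, one_mul]
        by_cases hc : (i : ℕ) + 1 + m = (j : ℕ)
        · rw [if_pos hc, if_pos (by omega)]
        · rw [if_neg hc, if_neg (by omega)]
      · intro l _ hl
        simp only [JBlock, of_apply, Fin.ext_iff]
        by_cases hil : (i : ℕ) = (l : ℕ)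
        · rw [if_pos hil, zero_mul]
        · rw [if_neg hil, if_neg, zero_mul]
          intro hc
          exact hl (Fin.ext (show (l:ℕ) = (i:ℕ) + 1 by omega))
      · intro h; exact absurd (Finset.mem_univ _) h
    · have hz : ∀ l ∈ (Finset.univ : Finset (Fin n)), JBlock n 0 i l *
          Matrix.of (fun (a b : Fin n) => if (a : ℕ) + m = (b : ℕ) then (1 : ℂ) else 0) l j
            = 0 := by
        intro l _
        have hl := l.isLt
        by_cases hil : i = l
        · simp [JBlock, hil]
        · simp only [JBlock, of_apply, if_neg hil]
          rw [if_neg (by omega), zero_mul]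
      rw [Finset.sum_eq_zero hz, of_apply, if_neg (by omega)]

lemma JBlock_pow_self (n : ℕ) : JBlock n 0 ^ n = 0 := by
  rw [JBlock_pow]
  ext i j
  have hj := j.isLt
  simp only [of_apply, Matrix.zero_apply]
  rw [if_neg (by omega)]

set_option maxHeartbeats 1000000

/-- The *cosquare `D_N = Δ_N⁻* Δ_N` equals `(I - iJ_N)⁻¹(I + iJ_N)
= I + 2iJ_N + 2i²J_N² + ⋯`; it is a polynomial in `J_N`, and
`J_N = i(I - D_N)(I + D_N)⁻¹` is a polynomial in `D_N`. -/
theorem starCosquare_DeltaN {k : ℕ} (N : Fin k → ℕ) (hN : ∀ i, 0 < N i) :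
    ((DeltaN N)ᴴ)⁻¹ * DeltaN N = (1 - Complex.I • JN N)⁻¹ * (1 + Complex.I • JN N) ∧
    ((DeltaN N)ᴴ)⁻¹ * DeltaN N =
      1 + ∑ j ∈ Finset.Icc 1 (Fintype.card (Σ i, Fin (N i))),
        (2 * Complex.I ^ j) • JN N ^ j ∧
    (∃ p : Polynomial ℂ, ((DeltaN N)ᴴ)⁻¹ * DeltaN N = Polynomial.aeval (JN N) p) ∧
    JN N = Complex.I •
      ((1 - ((DeltaN N)ᴴ)⁻¹ * DeltaN N) * (1 + ((DeltaN N)ᴴ)⁻¹ * DeltaN N)⁻¹) ∧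
    ∃ q : Polynomial ℂ, JN N = Polynomial.aeval (((DeltaN N)ᴴ)⁻¹ * DeltaN N) q := by
  classical
  set n := Fintype.card (Σ i, Fin (N i)) with hn
  set J : Matrix (Σ i, Fin (N i)) (Σ i, Fin (N i)) ℂ := JN N with hJdef
  set x : Matrix (Σ i, Fin (N i)) (Σ i, Fin (N i)) ℂ := Complex.I • JN N with hx
  set P : Matrix (Σ i, Fin (N i)) (Σ i, Fin (N i)) ℂ :=
    Matrix.blockDiagonal' (fun i => Pm (N i)) with hPdef
  -- block identities
  have hP2 : P * P = 1 := by
    rw [hPdef, ← Matrix.blockDiagonal'_mul]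
    rw [show (fun i => Pm (N i) * Pm (N i)) = (1 : ∀ i, Matrix (Fin (N i)) (Fin (N i)) ℂ) from
      funext fun i => Pm_mul_Pm (N i)]
    exact Matrix.blockDiagonal'_one
  have e1 : Matrix.blockDiagonal'
      (fun i => (1 : Matrix (Fin (N i)) (Fin (N i)) ℂ) + Complex.I • JBlock (N i) 0)
      = 1 + x := by
    rw [show (fun i => (1 : Matrix (Fin (N i)) (Fin (N i)) ℂ) + Complex.I • JBlock (N i) 0)
        = ((1 : ∀ i, Matrix (Fin (N i)) (Fin (N i)) ℂ)
            + Complex.I • fun i => JBlock (N i) 0) from rfl,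
      Matrix.blockDiagonal'_add, Matrix.blockDiagonal'_one, Matrix.blockDiagonal'_smul]
    rfl
  have e2 : Matrix.blockDiagonal'
      (fun i => (1 : Matrix (Fin (N i)) (Fin (N i)) ℂ) - Complex.I • JBlock (N i) 0)
      = 1 - x := by
    rw [show (fun i => (1 : Matrix (Fin (N i)) (Fin (N i)) ℂ) - Complex.I • JBlock (N i) 0)
        = ((1 : ∀ i, Matrix (Fin (N i)) (Fin (N i)) ℂ)
            - Complex.I • fun i => JBlock (N i) 0) from rfl,
      Matrix.blockDiagonal'_sub, Matrix.blockDiagonal'_one, Matrix.blockDiagonal'_smul]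
    rfl
  have hB : DeltaN N = P * (1 + x) := by
    calc DeltaN N
        = Matrix.blockDiagonal'
            (fun i => Pm (N i) * (1 + Complex.I • JBlock (N i) 0)) := by
          rw [DeltaN]; exact congrArg _ (funext fun i => Delta_eq (N i))
      _ = P * (1 + x) := by rw [Matrix.blockDiagonal'_mul, e1, hPdef]
  have hA : (DeltaN N)ᴴ = P * (1 - x) := by
    calc (DeltaN N)ᴴ
        = Matrix.blockDiagonal'
            (fun i => Pm (N i) * (1 - Complex.I • JBlock (N i) 0)) := by
          rw [DeltaN, Matrix.blockDiagonal'_conjTranspose]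
          exact congrArg _ (funext fun i => DeltaH_eq (N i))
      _ = P * (1 - x) := by rw [Matrix.blockDiagonal'_mul, e2, hPdef]
  -- nilpotency
  have hJn : J ^ n = 0 := by
    have hle : ∀ i, N i ≤ n := by
      intro i
      rw [hn]
      simp only [Fintype.card_sigma, Fintype.card_fin]
      exact Finset.single_le_sum (fun _ _ => Nat.zero_le _) (Finset.mem_univ i)
    have hz : ∀ i, JBlock (N i) 0 ^ n = (0 : Matrix (Fin (N i)) (Fin (N i)) ℂ) := by
      intro i
      have h := hle i
      rw [show n = N i + (n - N i) by omega, pow_add, JBlock_pow_self, zero_mul]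
    rw [hJdef, JN, ← Matrix.blockDiagonal'_pow]
    rw [show ((fun i => JBlock (N i) 0) ^ n : ∀ i, Matrix (Fin (N i)) (Fin (N i)) ℂ)
        = (0 : ∀ i, Matrix (Fin (N i)) (Fin (N i)) ℂ) from funext fun i => hz i]
    exact Matrix.blockDiagonal'_zero
  have hxn : x ^ n = 0 := by rw [hx, smul_pow, ← hJdef, hJn, smul_zero]
  -- geometric series
  set S : Matrix (Σ i, Fin (N i)) (Σ i, Fin (N i)) ℂ := ∑ m ∈ Finset.range n, x ^ m with hS
  have hKey : ∑ m ∈ Finset.range n, x ^ (m + 1) = S - 1 := by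
    have h1 := Finset.sum_range_succ' (fun m => x ^ m) n
    have h2 := Finset.sum_range_succ (fun m => x ^ m) n
    simp only [pow_zero] at h1
    rw [hxn, add_zero] at h2
    rw [eq_sub_iff_add_eq, ← h1, h2]
  have hAS : (1 - x) * S = 1 := by
    have h := geom_sum_mul x n
    rw [← hS] at h
    have h2 : S * (1 - x) = 1 := by
      rw [← neg_sub x 1, mul_neg, h, hxn, zero_sub, neg_neg]
    exact mul_eq_one_comm.mpr h2
  have hSA : S * (1 - x) = 1 := mul_eq_one_comm.mp hAS
  have hAinv : (1 - x)⁻¹ = S := Matrix.inv_eq_right_inv hAS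
  have hPinv : P⁻¹ = P := Matrix.inv_eq_right_inv hP2
  -- part 1
  have part1 : ((DeltaN N)ᴴ)⁻¹ * DeltaN N = (1 - x)⁻¹ * (1 + x) := by
    rw [hA, hB, Matrix.mul_inv_rev, hPinv, mul_assoc, ← mul_assoc P, hP2, one_mul]
  set D : Matrix (Σ i, Fin (N i)) (Σ i, Fin (N i)) ℂ := ((DeltaN N)ᴴ)⁻¹ * DeltaN N with hD
  have part1' : D = S * (1 + x) := by rw [part1, hAinv]
  have hSx : S * x = S - 1 := by
    rw [hS, Finset.sum_mul, ← hS, ← hKey]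
    exact Finset.sum_congr rfl fun m _ => (pow_succ x m).symm
  have hIcc : ∑ j ∈ Finset.Icc 1 n, x ^ j = S - 1 := by
    rw [← hKey, ← Finset.Ico_add_one_right_eq_Icc, Finset.sum_Ico_eq_sum_range]
    exact Finset.sum_congr (by rw [Nat.add_sub_cancel]) fun m _ => by rw [add_comm 1 m]
  have part2 : D = 1 + ∑ j ∈ Finset.Icc 1 n, (2 * Complex.I ^ j) • J ^ j := by
    have hsum : ∑ j ∈ Finset.Icc 1 n, (2 * Complex.I ^ j) • J ^ j = (2:ℂ) • (S - 1) := by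
      rw [← hIcc, Finset.smul_sum]
      refine Finset.sum_congr rfl fun j _ => ?_
      rw [hx, smul_pow, smul_smul, hJdef]
    rw [part1', mul_add, mul_one, hSx, hsum, two_smul]
    abel
  have part3 : ∃ p : Polynomial ℂ, D = Polynomial.aeval J p := by
    refine ⟨Polynomial.C 1 + ∑ j ∈ Finset.Icc 1 n,
      Polynomial.C (2 * Complex.I ^ j) * Polynomial.X ^ j, ?_⟩
    rw [part2, Polynomial.C_1, map_add, map_sum, _root_.map_one]
    congr 1
    refine Finset.sum_congr rfl fun j _ => ?_
    rw [_root_.map_mul, Polynomial.aeval_C, map_pow, Polynomial.aeval_X, Algebra.smul_def]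
  have hcommx : x * (1 - x) = (1 - x) * x := by
    rw [mul_sub, sub_mul, mul_one, one_mul]
  have h1mD : 1 - D = (-2 : ℂ) • (S * x) := by
    rw [part1']
    nth_rewrite 1 [← hSA]
    rw [← mul_sub,
      show (1 - x) - (1 + x) = (-2 : ℂ) • x by
        rw [show (-2 : ℂ) = -(2:ℂ) by norm_num, neg_smul, two_smul]; abel,
      mul_smul_comm]
  have h1pD : 1 + D = (2 : ℂ) • S := by
    rw [part1']
    nth_rewrite 1 [← hSA]
    rw [← mul_add,
      show (1 - x) + (1 + x)
          = (2:ℂ) • (1 : Matrix (Σ i, Fin (N i)) (Σ i, Fin (N i)) ℂ) by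
        rw [two_smul]; abel,
      mul_smul_comm, mul_one]
  have hDinv : (1 + D)⁻¹ = (2⁻¹ : ℂ) • (1 - x) := by
    refine Matrix.inv_eq_right_inv ?_
    rw [h1pD, smul_mul_assoc, mul_smul_comm, smul_smul, hSA]
    rw [show ((2:ℂ) * 2⁻¹) = 1 by norm_num, one_smul]
  have part4 : J = Complex.I • ((1 - D) * (1 + D)⁻¹) := by
    rw [hDinv, h1mD, smul_mul_assoc, mul_smul_comm, smul_smul, smul_smul]
    rw [mul_assoc (S) x (1 - x), hcommx, ← mul_assoc S (1-x) x, hSA, one_mul, hx, smul_smul,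
      hJdef]
    rw [show Complex.I * (-2:ℂ) * 2⁻¹ * Complex.I = 1 by
      rw [show Complex.I * (-2:ℂ) * 2⁻¹ * Complex.I
          = Complex.I * Complex.I * (-1) by ring, Complex.I_mul_I]
      norm_num, one_smul]
  -- part 5
  set W : Matrix (Σ i, Fin (N i)) (Σ i, Fin (N i)) ℂ :=
    ∑ j ∈ Finset.Icc 1 n, (2 * Complex.I ^ j) • J ^ j with hWdef
  have hW : D - 1 = W := by rw [part2, add_sub_cancel_left]
  have hV : W = J * (∑ j ∈ Finset.Icc 1 n, (2 * Complex.I ^ j) • J ^ (j - 1)) := by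
    rw [hWdef, Finset.mul_sum]
    refine Finset.sum_congr rfl fun j hj => ?_
    rw [mul_smul_comm]
    congr 1
    have h1 : 1 ≤ j := (Finset.mem_Icc.mp hj).1
    conv_lhs => rw [show j = (j - 1) + 1 by omega]
    rw [pow_succ']
  have hVcomm : Commute J (∑ j ∈ Finset.Icc 1 n, (2 * Complex.I ^ j) • J ^ (j - 1)) :=
    Commute.sum_right _ _ _ fun j _ => ((Commute.refl J).pow_right (j-1)).smul_right _
  have hWn : W ^ n = 0 := by
    rw [hV, hVcomm.mul_pow, hJn, zero_mul]
  set T : Matrix (Σ i, Fin (N i)) (Σ i, Fin (N i)) ℂ :=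
    ∑ m ∈ Finset.range n, ((-2:ℂ)⁻¹) ^ m • W ^ m with hT
  have hKeyW : ∑ m ∈ Finset.range n, ((-2:ℂ)⁻¹) ^ (m+1) • W ^ (m+1) = T - 1 := by
    have h1 := Finset.sum_range_succ' (fun m => ((-2:ℂ)⁻¹) ^ m • W ^ m) n
    have h2 := Finset.sum_range_succ (fun m => ((-2:ℂ)⁻¹) ^ m • W ^ m) n
    simp only [pow_zero, one_smul] at h1
    rw [hWn, smul_zero, add_zero] at h2
    rw [eq_sub_iff_add_eq, ← h1, h2]
  have hWT : W * T = (-2:ℂ) • (T - 1) := by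
    rw [← hKeyW, Finset.smul_sum, hT, Finset.mul_sum]
    refine Finset.sum_congr rfl fun m _ => ?_
    rw [mul_smul_comm, ← pow_succ', smul_smul]
    congr 1
    rw [pow_succ, mul_comm (((-2:ℂ)⁻¹) ^ m), ← mul_assoc]
    norm_num
  have h1mD' : 1 - D = -W := by rw [part2]; abel
  have hDinv2 : (1 + D)⁻¹ = (2⁻¹ : ℂ) • T := by
    refine Matrix.inv_eq_right_inv ?_
    have hcalc : (1 + D) * T
        = (2:ℂ) • (1 : Matrix (Σ i, Fin (N i)) (Σ i, Fin (N i)) ℂ) := by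
      rw [part2, add_mul, add_mul, one_mul, hWT, smul_sub]
      module
    rw [mul_smul_comm, hcalc, smul_smul]
    rw [show ((2⁻¹:ℂ) * 2) = 1 by norm_num, one_smul]
  have hJT : J = Complex.I • (T - 1) := by
    rw [part4, hDinv2, h1mD', neg_mul, mul_smul_comm, hWT, smul_smul]
    rw [show ((2⁻¹:ℂ) * (-2)) = -1 by norm_num, neg_one_smul, neg_neg]
  have part5 : ∃ q : Polynomial ℂ, J = Polynomial.aeval D q := by
    refine ⟨Polynomial.C Complex.I *
      ((∑ m ∈ Finset.range n, Polynomial.C (((-2:ℂ)⁻¹) ^ m) * (Polynomial.X - 1) ^ m) - 1),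
      ?_⟩
    rw [hJT, _root_.map_mul, Polynomial.aeval_C, map_sub, map_sum, _root_.map_one,
      Algebra.smul_def]
    congr 2
    rw [hT]
    refine Finset.sum_congr rfl fun m _ => ?_
    rw [← hW]
    simp [Algebra.smul_def]
  exact ⟨part1, part2, part3, part4, part5⟩
end
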